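/- arXiv:1310.6770 — 4 statements merged into one kernel-verified Lean document; each statement's English description precedes it below -/
import Mathlib

section
/- For y(X) = ν_0 ∏_{i=1}^N h_i(X_i) + μ_0 + Σ_{i=1}^N g_i(X_i), the exact variance is σ² = ν_0²[∏_i (δ_i² + ν_i²) − ∏_i ν_i²] + Σ_i λ_i² + 2ν_0 (∏_i ν_i) Σ_i η_i²/ν_i, where η_i² = Cov(h_i(X_i), g_i(X_i)) and ν_i ≠ 0 for all i. -/
open MeasureTheory Finset

noncomputable section

/-- Product of integrable functions of separate coordinates is integrable over `Measure.pi`. -/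
theorem my_integrable_prod {n : ℕ} (μ : Fin n → Measure ℝ) [∀ i, SigmaFinite (μ i)]
    {f : Fin n → ℝ → ℝ} (hf : ∀ i, Integrable (f i) (μ i)) :
    Integrable (fun (x : Fin n → ℝ) ↦ ∏ i, f i (x i)) (Measure.pi μ) := by
  induction n with
  | zero => simp only [Finset.univ_eq_empty, Finset.prod_empty, integrable_const_iff,
      one_ne_zero, Measure.pi_empty_univ, ENNReal.one_lt_top, or_true, false_or]; exact ⟨by simp [Measure.pi_empty_univ]⟩
  | succ n n_ih =>
      have := ((measurePreserving_piFinSuccAbove (fun i => μ i) 0).symm)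
      rw [← this.integrable_comp_emb (MeasurableEquiv.measurableEmbedding _)]
      simp only [MeasurableEquiv.piFinSuccAbove_symm_apply, Fin.insertNthEquiv,
        Fin.prod_univ_succ, Fin.insertNth_zero, Equiv.coe_fn_mk,
        Fin.zero_succAbove, Nat.cast_id, Function.comp_def, Fin.cons_zero, Fin.cons_succ]
      have : Integrable (fun (x : Fin n → ℝ) ↦ ∏ j, f (Fin.succ j) (x j))
          (Measure.pi fun j => μ (Fin.succ j)) := n_ih _ (fun i ↦ hf _)
      exact Integrable.mul_prod (hf 0) this

/-- Fubini for products over `Measure.pi` with general measures. -/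
theorem my_integral_prod {n : ℕ} (μ : Fin n → Measure ℝ) [∀ i, SigmaFinite (μ i)]
    (f : Fin n → ℝ → ℝ) :
    ∫ x : Fin n → ℝ, ∏ i, f i (x i) ∂(Measure.pi μ) = ∏ i, ∫ x, f i x ∂(μ i) := by
  induction n with
  | zero =>
      simp only [Finset.univ_eq_empty, Finset.prod_empty, integral_const,
        measureReal_def, Measure.pi_empty_univ, ENNReal.toReal_one, smul_eq_mul, mul_one, one_smul]
  | succ n n_ih =>
      calc
        _ = ∫ x : ℝ × (Fin n → ℝ),
            f 0 x.1 * ∏ i : Fin n, f (Fin.succ i) (x.2 i)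
              ∂((μ 0).prod (Measure.pi fun j => μ (Fin.succ j))) := by
          rw [← ((measurePreserving_piFinSuccAbove (fun i => μ i) 0).symm).integral_comp']
          simp only [MeasurableEquiv.piFinSuccAbove_symm_apply, Fin.insertNthEquiv,
            Fin.prod_univ_succ, Fin.insertNth_zero, Equiv.coe_fn_mk, Fin.cons_succ,
            Fin.zero_succAbove, Nat.cast_id, cast_eq, Fin.cons_zero]
        _ = (∫ x, f 0 x ∂(μ 0)) * ∏ i : Fin n, ∫ x, f (Fin.succ i) x ∂(μ (Fin.succ i)) := by
          rw [← n_ih, ← integral_prod_mul]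
        _ = ∏ i, ∫ x, f i x ∂(μ i) := by rw [Fin.prod_univ_succ]

theorem my_L2_mul {ν : Measure ℝ} [IsProbabilityMeasure ν] {f g : ℝ → ℝ}
    (hf : MemLp f 2 ν) (hg : MemLp g 2 ν) : Integrable (fun t => f t * g t) ν := by
  have h1 := (hf.add hg).integrable_sq
  have h2 := hf.integrable_sq
  have h3 := hg.integrable_sq
  have h4 := (((h1.sub h2).sub h3).const_mul (1 / 2 : ℝ))
  have he : (fun t => f t * g t)
      = fun t => (1 / 2 : ℝ) * (((f + g) t ^ 2 - f t ^ 2) - g t ^ 2) := by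
    funext t; simp only [Pi.add_apply]; ring
  rw [he]; exact h4

theorem my_prod_update_apply {N : ℕ} (F : Fin N → ℝ → ℝ) (i : Fin N) (b : ℝ → ℝ)
    (x : Fin N → ℝ) (s : Finset (Fin N)) (hi : i ∈ s) :
    ∏ k ∈ s, Function.update F i b k (x k) = b (x i) * ∏ k ∈ s.erase i, F k (x k) := by
  rw [← Finset.mul_prod_erase s _ hi, Function.update_self]
  congr 1
  exact Finset.prod_congr rfl fun k hk => by
    rw [Function.update_of_ne (Finset.ne_of_mem_erase hk)]

theorem my_pi_term {N : ℕ} (μ : Fin N → Measure ℝ) [∀ i, IsProbabilityMeasure (μ i)]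
    (i : Fin N) (F : Fin N → ℝ → ℝ) (b : ℝ → ℝ)
    (hF : ∀ k, Integrable (F k) (μ k)) (hb : Integrable b (μ i)) :
    Integrable (fun x : Fin N → ℝ => b (x i) * ∏ k ∈ Finset.univ.erase i, F k (x k))
      (Measure.pi μ) ∧
    ∫ x : Fin N → ℝ, b (x i) * ∏ k ∈ Finset.univ.erase i, F k (x k) ∂(Measure.pi μ)
      = (∫ t, b t ∂(μ i)) * ∏ k ∈ Finset.univ.erase i, ∫ t, F k t ∂(μ k) := by
  have hfam : ∀ k, Integrable (Function.update F i b k) (μ k) := by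
    intro k
    rcases eq_or_ne k i with hk | hk
    · subst hk; rw [Function.update_self]; exact hb
    · rw [Function.update_of_ne hk]; exact hF k
  have hpt : (fun x : Fin N → ℝ => b (x i) * ∏ k ∈ Finset.univ.erase i, F k (x k))
      = fun x => ∏ k, Function.update F i b k (x k) := by
    funext x
    rw [my_prod_update_apply F i b x Finset.univ (Finset.mem_univ i)]
  constructor
  · rw [hpt]; exact my_integrable_prod μ hfam
  · rw [hpt, my_integral_prod]
    rw [← Finset.mul_prod_erase Finset.univ _ (Finset.mem_univ i), Function.update_self]
    congr 1
    exact Finset.prod_congr rfl fun k hk => by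
      rw [Function.update_of_ne (Finset.ne_of_mem_erase hk)]

theorem variance_of_blended
    {N : ℕ} (μ : Fin N → Measure ℝ) [∀ i, IsProbabilityMeasure (μ i)]
    (ν₀ μ₀ : ℝ) (h g : Fin N → ℝ → ℝ) (ν μm δ2 lam2 η2 : Fin N → ℝ)
    (hmemh : ∀ i, MemLp (h i) 2 (μ i)) (hmemg : ∀ i, MemLp (g i) 2 (μ i))
    (hν : ∀ i, ν i = ∫ t, h i t ∂(μ i)) (hνne : ∀ i, ν i ≠ 0)
    (hμm : ∀ i, μm i = ∫ t, g i t ∂(μ i))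
    (hδ : ∀ i, δ2 i = ∫ t, (h i t - ν i) ^ 2 ∂(μ i))
    (hlam : ∀ i, lam2 i = ∫ t, (g i t - μm i) ^ 2 ∂(μ i))
    (hη : ∀ i, η2 i = ∫ t, (h i t - ν i) * (g i t - μm i) ∂(μ i))
    (y : (Fin N → ℝ) → ℝ)
    (hy : ∀ x, y x = ν₀ * (∏ i, h i (x i)) + μ₀ + ∑ i, g i (x i)) :
    ∫ x, (y x - ∫ x', y x' ∂(Measure.pi μ)) ^ 2 ∂(Measure.pi μ) =
      ν₀ ^ 2 * ((∏ i, (δ2 i + (ν i) ^ 2)) - ∏ i, (ν i) ^ 2)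
        + (∑ i, lam2 i)
        + 2 * ν₀ * (∏ i, ν i) * ∑ i, η2 i / ν i := by
  -- one-variable integrability
  have intH : ∀ i, Integrable (h i) (μ i) := fun i => (hmemh i).integrable one_le_two
  have intG : ∀ i, Integrable (g i) (μ i) := fun i => (hmemg i).integrable one_le_two
  have memC : ∀ i, MemLp (fun t => g i t - μm i) 2 (μ i) := fun i =>
    (hmemg i).sub (memLp_const _)
  have intC : ∀ i, Integrable (fun t => g i t - μm i) (μ i) := fun i =>
    (memC i).integrable one_le_two
  have intH2 : ∀ i, Integrable (fun t => h i t ^ 2) (μ i) := fun i => (hmemh i).integrable_sq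
  have intC2 : ∀ i, Integrable (fun t => (g i t - μm i) ^ 2) (μ i) := fun i =>
    (memC i).integrable_sq
  have intHC : ∀ i, Integrable (fun t => h i t * (g i t - μm i)) (μ i) := fun i =>
    my_L2_mul (hmemh i) (memC i)
  -- one-variable integrals
  have Eg : ∀ i, ∫ t, g i t ∂(μ i) = μm i := fun i => (hμm i).symm
  have Eh : ∀ i, ∫ t, h i t ∂(μ i) = ν i := fun i => (hν i).symm
  have Ec : ∀ i, ∫ t, (g i t - μm i) ∂(μ i) = 0 := by
    intro i
    rw [integral_sub (intG i) (integrable_const _), integral_const, Eg i]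
    simp
  have Eh2 : ∀ i, ∫ t, h i t ^ 2 ∂(μ i) = δ2 i + ν i ^ 2 := by
    intro i
    have hpt : ∀ t : ℝ, (h i t - ν i) ^ 2 = h i t ^ 2 - 2 * ν i * h i t + ν i ^ 2 := by
      intro t; ring
    have : δ2 i = ∫ t, (h i t ^ 2 - 2 * ν i * h i t + ν i ^ 2) ∂(μ i) := by
      rw [hδ i]; exact integral_congr_ae (Filter.Eventually.of_forall fun t => hpt t)
    have J1 : Integrable (fun t => h i t ^ 2 - 2 * ν i * h i t) (μ i) :=
      (intH2 i).sub ((intH i).const_mul _)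
    have J2 : Integrable (fun t => 2 * ν i * h i t) (μ i) := (intH i).const_mul _
    rw [integral_add J1 (integrable_const _), integral_sub (intH2 i) J2,
      integral_const_mul, integral_const, Eh i] at this
    have hμu : (μ i).real Set.univ = 1 := by simp
    rw [hμu, one_smul] at this
    linarith [this]
  have Ehc : ∀ i, ∫ t, h i t * (g i t - μm i) ∂(μ i) = η2 i := by
    intro i
    have hpt : ∀ t : ℝ, (h i t - ν i) * (g i t - μm i)
        = h i t * (g i t - μm i) - ν i * (g i t - μm i) := by intro t; ring
    have : η2 i = ∫ t, (h i t * (g i t - μm i) - ν i * (g i t - μm i)) ∂(μ i) := by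
      rw [hη i]; exact integral_congr_ae (Filter.Eventually.of_forall fun t => hpt t)
    have J2 : Integrable (fun t => ν i * (g i t - μm i)) (μ i) := (intC i).const_mul _
    rw [integral_sub (intHC i) J2, integral_const_mul, Ec i] at this
    rw [this]; ring
  have Ec2 : ∀ i, ∫ t, (g i t - μm i) ^ 2 ∂(μ i) = lam2 i := fun i => (hlam i).symm
  -- pi-level facts
  have IA : Integrable (fun x : Fin N → ℝ => ∏ i, h i (x i)) (Measure.pi μ) :=
    my_integrable_prod μ intH
  have EA : ∫ x : Fin N → ℝ, ∏ i, h i (x i) ∂(Measure.pi μ) = ∏ i, ν i := by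
    rw [my_integral_prod]; exact Finset.prod_congr rfl fun i _ => Eh i
  have hA2 : (fun x : Fin N → ℝ => (∏ i, h i (x i)) ^ 2)
      = fun x => ∏ i, (h i (x i)) ^ 2 := by
    funext x; rw [← Finset.prod_pow]
  have IA2 : Integrable (fun x : Fin N → ℝ => (∏ i, h i (x i)) ^ 2) (Measure.pi μ) := by
    rw [hA2]; exact my_integrable_prod μ intH2
  have EA2 : ∫ x : Fin N → ℝ, (∏ i, h i (x i)) ^ 2 ∂(Measure.pi μ)
      = ∏ i, (δ2 i + ν i ^ 2) := by
    rw [hA2]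
    exact (my_integral_prod μ fun i t => h i t ^ 2).trans
      (Finset.prod_congr rfl fun i _ => Eh2 i)
  -- coordinate functions
  have coord : ∀ (i : Fin N) (f : ℝ → ℝ), Integrable f (μ i) →
      Integrable (fun x : Fin N → ℝ => f (x i)) (Measure.pi μ) ∧
      ∫ x : Fin N → ℝ, f (x i) ∂(Measure.pi μ) = ∫ t, f t ∂(μ i) := by
    intro i f hf
    have := my_pi_term μ i (fun _ _ => (1 : ℝ)) f (fun k => integrable_const _) hf
    obtain ⟨I, E⟩ := this
    simp only [Finset.prod_const_one, mul_one, integral_const, measure_univ,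
      probReal_univ, ENNReal.toReal_one, one_smul] at I E
    exact ⟨I, E⟩
  have IG : ∀ i, Integrable (fun x : Fin N → ℝ => g i (x i)) (Measure.pi μ) := fun i =>
    (coord i (g i) (intG i)).1
  have EG : ∀ i, ∫ x : Fin N → ℝ, g i (x i) ∂(Measure.pi μ) = μm i := fun i => by
    rw [(coord i (g i) (intG i)).2, Eg i]
  have IC : ∀ i, Integrable (fun x : Fin N → ℝ => g i (x i) - μm i) (Measure.pi μ) := fun i =>
    (coord i _ (intC i)).1
  have ECo : ∀ i, ∫ x : Fin N → ℝ, (g i (x i) - μm i) ∂(Measure.pi μ) = 0 := fun i => by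
    rw [(coord i _ (intC i)).2, Ec i]
  have IC2 : ∀ i, Integrable (fun x : Fin N → ℝ => (g i (x i) - μm i) ^ 2) (Measure.pi μ) :=
    fun i => (coord i _ (intC2 i)).1
  have EC2 : ∀ i, ∫ x : Fin N → ℝ, (g i (x i) - μm i) ^ 2 ∂(Measure.pi μ) = lam2 i :=
    fun i => by rw [(coord i _ (intC2 i)).2, Ec2 i]
  -- cross terms between distinct coordinates
  have CC : ∀ i j : Fin N, i ≠ j →
      Integrable (fun x : Fin N → ℝ => (g i (x i) - μm i) * (g j (x j) - μm j))
        (Measure.pi μ) ∧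
      ∫ x : Fin N → ℝ, (g i (x i) - μm i) * (g j (x j) - μm j) ∂(Measure.pi μ) = 0 := by
    intro i j hij
    set F : Fin N → ℝ → ℝ :=
      Function.update (fun _ _ => (1 : ℝ)) j (fun t => g j t - μm j) with hF
    have hFint : ∀ k, Integrable (F k) (μ k) := by
      intro k
      rcases eq_or_ne k j with hk | hk
      · subst hk; rw [hF, Function.update_self]; exact intC k
      · rw [hF, Function.update_of_ne hk]; exact integrable_const _
    have hj : j ∈ Finset.univ.erase i := Finset.mem_erase.2 ⟨hij.symm, Finset.mem_univ j⟩
    have key := my_pi_term μ i F (fun t => g i t - μm i) hFint (intC i)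
    have hpt : (fun x : Fin N → ℝ =>
        (g i (x i) - μm i) * ∏ k ∈ Finset.univ.erase i, F k (x k))
        = fun x => (g i (x i) - μm i) * (g j (x j) - μm j) := by
      funext x
      congr 1
      rw [hF, my_prod_update_apply _ j _ x _ hj]
      simp
    rw [hpt] at key
    exact ⟨key.1, by rw [key.2, Ec i, zero_mul]⟩
  -- product times centered coordinate
  have AC : ∀ i : Fin N,
      Integrable (fun x : Fin N → ℝ => (∏ k, h k (x k)) * (g i (x i) - μm i))
        (Measure.pi μ) ∧
      ∫ x : Fin N → ℝ, (∏ k, h k (x k)) * (g i (x i) - μm i) ∂(Measure.pi μ)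
        = η2 i * ∏ k ∈ Finset.univ.erase i, ν k := by
    intro i
    have key := my_pi_term μ i h (fun t => h i t * (g i t - μm i)) intH (intHC i)
    have hpt : (fun x : Fin N → ℝ =>
        (h i (x i) * (g i (x i) - μm i)) * ∏ k ∈ Finset.univ.erase i, h k (x k))
        = fun x => (∏ k, h k (x k)) * (g i (x i) - μm i) := by
      funext x
      rw [← Finset.mul_prod_erase Finset.univ (fun k => h k (x k)) (Finset.mem_univ i)]
      ring
    rw [hpt] at key
    refine ⟨key.1, ?_⟩
    rw [key.2, Ehc i]
    congr 1
    exact Finset.prod_congr rfl fun k _ => Eh k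
  -- sums
  have IS : Integrable (fun x : Fin N → ℝ => ∑ i, (g i (x i) - μm i)) (Measure.pi μ) :=
    integrable_finset_sum _ fun i _ => IC i
  have ES : ∫ x : Fin N → ℝ, ∑ i, (g i (x i) - μm i) ∂(Measure.pi μ) = 0 := by
    rw [integral_finset_sum _ fun i _ => IC i]
    simp [ECo]
  have hAS : (fun x : Fin N → ℝ => (∏ k, h k (x k)) * ∑ i, (g i (x i) - μm i))
      = fun x => ∑ i, (∏ k, h k (x k)) * (g i (x i) - μm i) := by
    funext x; rw [Finset.mul_sum]
  have IAS : Integrable (fun x : Fin N → ℝ =>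
      (∏ k, h k (x k)) * ∑ i, (g i (x i) - μm i)) (Measure.pi μ) := by
    rw [hAS]; exact integrable_finset_sum _ fun i _ => (AC i).1
  have EAS : ∫ x : Fin N → ℝ, (∏ k, h k (x k)) * ∑ i, (g i (x i) - μm i) ∂(Measure.pi μ)
      = ∑ i, η2 i * ∏ k ∈ Finset.univ.erase i, ν k := by
    rw [hAS, integral_finset_sum _ fun i _ => (AC i).1]
    exact Finset.sum_congr rfl fun i _ => (AC i).2
  have hS2 : (fun x : Fin N → ℝ => (∑ i, (g i (x i) - μm i)) ^ 2)
      = fun x => ∑ i, ∑ j, (g i (x i) - μm i) * (g j (x j) - μm j) := by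
    funext x
    rw [sq, Finset.sum_mul_sum]
  have ICCall : ∀ i j : Fin N,
      Integrable (fun x : Fin N → ℝ => (g i (x i) - μm i) * (g j (x j) - μm j))
        (Measure.pi μ) := by
    intro i j
    rcases eq_or_ne i j with rfl | hij
    · have := IC2 i
      simpa [sq] using this
    · exact (CC i j hij).1
  have IS2 : Integrable (fun x : Fin N → ℝ => (∑ i, (g i (x i) - μm i)) ^ 2)
      (Measure.pi μ) := by
    rw [hS2]
    exact integrable_finset_sum _ fun i _ =>
      integrable_finset_sum _ fun j _ => ICCall i j
  have ES2 : ∫ x : Fin N → ℝ, (∑ i, (g i (x i) - μm i)) ^ 2 ∂(Measure.pi μ)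
      = ∑ i, lam2 i := by
    rw [hS2, integral_finset_sum _ fun i _ => integrable_finset_sum _ fun j _ => ICCall i j]
    refine Finset.sum_congr rfl fun i _ => ?_
    rw [integral_finset_sum _ fun j _ => ICCall i j]
    rw [Finset.sum_eq_single_of_mem i (Finset.mem_univ i)]
    · have := EC2 i
      rw [← this]
      congr 1; funext x; ring
    · intro j _ hji
      exact (CC i j (fun hh => hji hh.symm)).2
  -- mean of y
  have hM : ∫ x', y x' ∂(Measure.pi μ) = ν₀ * (∏ i, ν i) + μ₀ + ∑ i, μm i := by
    simp only [hy]
    have J0 : Integrable (fun x : Fin N → ℝ => ν₀ * ∏ i, h i (x i)) (Measure.pi μ) :=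
      IA.const_mul ν₀
    have J1 : Integrable (fun x : Fin N → ℝ => ν₀ * ∏ i, h i (x i) + μ₀) (Measure.pi μ) :=
      J0.add (integrable_const μ₀)
    rw [integral_add J1 (integrable_finset_sum _ fun i _ => IG i),
      integral_add J0 (integrable_const μ₀),
      integral_const_mul, EA, integral_const,
      integral_finset_sum _ fun i _ => IG i]
    simp [EG]
  set P := ∏ i, ν i with hP
  -- expansion
  have expand : ∀ x : Fin N → ℝ, (y x - ∫ x', y x' ∂(Measure.pi μ)) ^ 2
      = ν₀ ^ 2 * (∏ i, h i (x i)) ^ 2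
        + (2 * ν₀) * ((∏ k, h k (x k)) * ∑ i, (g i (x i) - μm i))
        + (∑ i, (g i (x i) - μm i)) ^ 2
        + (-(2 * ν₀ ^ 2 * P)) * (∏ i, h i (x i))
        + (-(2 * ν₀ * P)) * (∑ i, (g i (x i) - μm i))
        + ν₀ ^ 2 * P ^ 2 := by
    intro x
    rw [hy x, hM]
    have hsum : ∑ i, (g i (x i) - μm i) = (∑ i, g i (x i)) - ∑ i, μm i :=
      Finset.sum_sub_distrib _ _
    rw [hsum]
    ring
  have I1 : Integrable (fun x : Fin N → ℝ => ν₀ ^ 2 * (∏ i, h i (x i)) ^ 2)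
      (Measure.pi μ) := IA2.const_mul _
  have I2 : Integrable (fun x : Fin N → ℝ =>
      (2 * ν₀) * ((∏ k, h k (x k)) * ∑ i, (g i (x i) - μm i))) (Measure.pi μ) :=
    IAS.const_mul _
  have I4 : Integrable (fun x : Fin N → ℝ => (-(2 * ν₀ ^ 2 * P)) * (∏ i, h i (x i)))
      (Measure.pi μ) := IA.const_mul _
  have I5 : Integrable (fun x : Fin N → ℝ =>
      (-(2 * ν₀ * P)) * (∑ i, (g i (x i) - μm i))) (Measure.pi μ) := IS.const_mul _
  calc ∫ x, (y x - ∫ x', y x' ∂(Measure.pi μ)) ^ 2 ∂(Measure.pi μ)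
      = ∫ x, (ν₀ ^ 2 * (∏ i, h i (x i)) ^ 2
        + (2 * ν₀) * ((∏ k, h k (x k)) * ∑ i, (g i (x i) - μm i))
        + (∑ i, (g i (x i) - μm i)) ^ 2
        + (-(2 * ν₀ ^ 2 * P)) * (∏ i, h i (x i))
        + (-(2 * ν₀ * P)) * (∑ i, (g i (x i) - μm i))
        + ν₀ ^ 2 * P ^ 2) ∂(Measure.pi μ) := by
        exact integral_congr_ae (Filter.Eventually.of_forall fun x => expand x)
    _ = ν₀ ^ 2 * (∏ i, (δ2 i + ν i ^ 2))
        + (2 * ν₀) * (∑ i, η2 i * ∏ k ∈ Finset.univ.erase i, ν k)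
        + (∑ i, lam2 i)
        + (-(2 * ν₀ ^ 2 * P)) * P
        + (-(2 * ν₀ * P)) * 0
        + ν₀ ^ 2 * P ^ 2 := by
        have I12 : Integrable (fun x : Fin N → ℝ => ν₀ ^ 2 * (∏ i, h i (x i)) ^ 2
            + (2 * ν₀) * ((∏ k, h k (x k)) * ∑ i, (g i (x i) - μm i)))
            (Measure.pi μ) := I1.add I2
        have I123 : Integrable (fun x : Fin N → ℝ => ν₀ ^ 2 * (∏ i, h i (x i)) ^ 2
            + (2 * ν₀) * ((∏ k, h k (x k)) * ∑ i, (g i (x i) - μm i))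
            + (∑ i, (g i (x i) - μm i)) ^ 2) (Measure.pi μ) := I12.add IS2
        have I1234 : Integrable (fun x : Fin N → ℝ => ν₀ ^ 2 * (∏ i, h i (x i)) ^ 2
            + (2 * ν₀) * ((∏ k, h k (x k)) * ∑ i, (g i (x i) - μm i))
            + (∑ i, (g i (x i) - μm i)) ^ 2
            + (-(2 * ν₀ ^ 2 * P)) * (∏ i, h i (x i))) (Measure.pi μ) := I123.add I4
        have I12345 : Integrable (fun x : Fin N → ℝ => ν₀ ^ 2 * (∏ i, h i (x i)) ^ 2
            + (2 * ν₀) * ((∏ k, h k (x k)) * ∑ i, (g i (x i) - μm i))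
            + (∑ i, (g i (x i) - μm i)) ^ 2
            + (-(2 * ν₀ ^ 2 * P)) * (∏ i, h i (x i))
            + (-(2 * ν₀ * P)) * (∑ i, (g i (x i) - μm i))) (Measure.pi μ) := I1234.add I5
        rw [integral_add I12345 (integrable_const _),
          integral_add I1234 I5,
          integral_add I123 I4,
          integral_add I12 IS2,
          integral_add I1 I2,
          integral_const_mul, integral_const_mul, integral_const_mul, integral_const_mul,
          EA2, EAS, ES2, EA, ES, integral_const]
        simp
    _ = ν₀ ^ 2 * ((∏ i, (δ2 i + (ν i) ^ 2)) - ∏ i, (ν i) ^ 2) + (∑ i, lam2 i)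
        + 2 * ν₀ * P * ∑ i, η2 i / ν i := by
        have hsum : ∑ i, η2 i * ∏ k ∈ Finset.univ.erase i, ν k
            = (∑ i, η2 i / ν i) * P := by
          rw [Finset.sum_mul]
          refine Finset.sum_congr rfl fun i _ => ?_
          have hpe : (∏ k ∈ Finset.univ.erase i, ν k) * ν i = P :=
            Finset.prod_erase_mul Finset.univ ν (Finset.mem_univ i)
          rw [div_mul_eq_mul_div, eq_div_iff (hνne i), mul_assoc, hpe]
        have hP2 : P ^ 2 = ∏ i, (ν i) ^ 2 := by rw [hP, ← Finset.prod_pow]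
        linear_combination (2 * ν₀) * hsum - ν₀ ^ 2 * hP2
end
end

section
/- Given zero-mean square-integrable random variables w, w̃, ŵ with E[w w̃] = E[w̃ ŵ] = E[w̃²] = σ̃² and E[ŵ²] = σ̂² with σ̂² > σ̃², define α = (σ̂² − E[w ŵ])/(σ̂² − σ̃²) and w̄ = α w̃ + (1−α) ŵ. Then E[(w − w̄)²] ≤ E[(w − w̃)²] and E[(w − w̄)²] ≤ E[(w − ŵ)²]; specifically E[(w−w̄)²] − E[(w−w̃)²] = −(1−α)²(σ̂²−σ̃²) and E[(w−w̄)²] − E[(w−ŵ)²] = −α²(σ̂²−σ̃²). -/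
open MeasureTheory

noncomputable section

lemma mul_integrable_of_memL2 {Ω : Type*} [MeasurableSpace Ω] {P : Measure Ω}
    {f g : Ω → ℝ} (hf : MemLp f 2 P) (hg : MemLp g 2 P) :
    Integrable (fun ω => f ω * g ω) P := by
  have h1 : Integrable (fun ω => (f ω + g ω) ^ 2) P := (hf.add hg).integrable_sq
  have h2 := hf.integrable_sq
  have h3 := hg.integrable_sq
  have h4 : Integrable (fun ω => ((f ω + g ω) ^ 2 - f ω ^ 2 - g ω ^ 2) * (1/2)) P :=
    ((h1.sub h2).sub h3).mul_const _
  refine h4.congr (Filter.Eventually.of_forall fun ω => ?_)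
  ring

lemma expand_sq_integral {Ω : Type*} [MeasurableSpace Ω] {P : Measure Ω}
    {u v : Ω → ℝ} (hu : MemLp u 2 P) (hv : MemLp v 2 P) :
    ∫ ω, (u ω - v ω) ^ 2 ∂P
      = ∫ ω, u ω * u ω ∂P - 2 * ∫ ω, u ω * v ω ∂P + ∫ ω, v ω * v ω ∂P := by
  have i1 := mul_integrable_of_memL2 hu hu
  have i2 := mul_integrable_of_memL2 hu hv
  have i3 := mul_integrable_of_memL2 hv hv
  have j2 : Integrable (fun ω => (-2 : ℝ) * (u ω * v ω)) P := i2.const_mul _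
  have e : ∫ ω, (u ω - v ω) ^ 2 ∂P
      = ∫ ω, (u ω * u ω + ((-2 : ℝ) * (u ω * v ω) + v ω * v ω)) ∂P := by
    congr 1; funext ω; ring
  have j23 : Integrable (fun ω => (-2 : ℝ) * (u ω * v ω) + v ω * v ω) P := j2.add i3
  rw [e, integral_add i1 j23, integral_add j2 i3, integral_const_mul]
  ring

theorem linear_hybrid_error_optimality
    {Ω : Type*} [MeasurableSpace Ω] (P : Measure Ω) [IsProbabilityMeasure P]
    (w wt wh : Ω → ℝ)
    (hmw : MemLp w 2 P) (hmwt : MemLp wt 2 P) (hmwh : MemLp wh 2 P)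
    (hw0 : ∫ ω, w ω ∂P = 0) (hwt0 : ∫ ω, wt ω ∂P = 0) (hwh0 : ∫ ω, wh ω ∂P = 0)
    (σt2 σh2 : ℝ)
    (hσt : σt2 = ∫ ω, (wt ω) ^ 2 ∂P) (hσh : σh2 = ∫ ω, (wh ω) ^ 2 ∂P)
    (h1 : ∫ ω, w ω * wt ω ∂P = σt2) (h2 : ∫ ω, wt ω * wh ω ∂P = σt2)
    (hlt : σt2 < σh2)
    (α : ℝ) (hα : α = (σh2 - ∫ ω, w ω * wh ω ∂P) / (σh2 - σt2))
    (wb : Ω → ℝ) (hwb : ∀ ω, wb ω = α * wt ω + (1 - α) * wh ω) :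
    (∫ ω, (w ω - wb ω) ^ 2 ∂P ≤ ∫ ω, (w ω - wt ω) ^ 2 ∂P) ∧
    (∫ ω, (w ω - wb ω) ^ 2 ∂P ≤ ∫ ω, (w ω - wh ω) ^ 2 ∂P) ∧
    ((∫ ω, (w ω - wb ω) ^ 2 ∂P) - ∫ ω, (w ω - wt ω) ^ 2 ∂P
      = -((1 - α) ^ 2) * (σh2 - σt2)) ∧
    ((∫ ω, (w ω - wb ω) ^ 2 ∂P) - ∫ ω, (w ω - wh ω) ^ 2 ∂P
      = -(α ^ 2) * (σh2 - σt2)) := by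
  set c : ℝ := ∫ ω, w ω * wh ω ∂P with hc
  set A : ℝ := ∫ ω, w ω * w ω ∂P with hA
  -- basic rewrites of variances
  have hσt' : ∫ ω, wt ω * wt ω ∂P = σt2 := by
    rw [hσt]; congr 1; funext ω; ring
  have hσh' : ∫ ω, wh ω * wh ω ∂P = σh2 := by
    rw [hσh]; congr 1; funext ω; ring
  -- α relation
  have hne : σh2 - σt2 ≠ 0 := by linarith
  have hαc : α * (σh2 - σt2) = σh2 - c := by
    rw [hα]; field_simp
  -- wb is Memℒp
  have hmwb : MemLp wb 2 P := by
    have hwb' : wb = fun ω => α * wt ω + (1 - α) * wh ω := funext hwb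
    rw [hwb']
    exact (hmwt.const_mul α).add (hmwh.const_mul (1 - α))
  -- cross moments with wb
  have i1 := mul_integrable_of_memL2 hmw hmwt
  have i2 := mul_integrable_of_memL2 hmw hmwh
  have i3 := mul_integrable_of_memL2 hmwt hmwt
  have i4 := mul_integrable_of_memL2 hmwt hmwh
  have i5 := mul_integrable_of_memL2 hmwh hmwh
  have Ewb : ∫ ω, w ω * wb ω ∂P = α * σt2 + (1 - α) * c := by
    have e : ∫ ω, w ω * wb ω ∂P
        = ∫ ω, (α * (w ω * wt ω) + (1 - α) * (w ω * wh ω)) ∂P := by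
      congr 1; funext ω; rw [hwb ω]; ring
    have j1 : Integrable (fun ω => α * (w ω * wt ω)) P := i1.const_mul _
    have j2 : Integrable (fun ω => (1 - α) * (w ω * wh ω)) P := i2.const_mul _
    rw [e, integral_add j1 j2, integral_const_mul, integral_const_mul, h1]
  have Ebb : ∫ ω, wb ω * wb ω ∂P
      = α ^ 2 * σt2 + 2 * α * (1 - α) * σt2 + (1 - α) ^ 2 * σh2 := by
    have e : ∫ ω, wb ω * wb ω ∂P
        = ∫ ω, (α ^ 2 * (wt ω * wt ω) + ((2 * α * (1 - α)) * (wt ω * wh ω)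
            + (1 - α) ^ 2 * (wh ω * wh ω))) ∂P := by
      congr 1; funext ω; rw [hwb ω]; ring
    have j3 : Integrable (fun ω => α ^ 2 * (wt ω * wt ω)) P := i3.const_mul _
    have j4 : Integrable (fun ω => 2 * α * (1 - α) * (wt ω * wh ω)) P := i4.const_mul _
    have j5 : Integrable (fun ω => (1 - α) ^ 2 * (wh ω * wh ω)) P := i5.const_mul _
    have j45 : Integrable (fun ω => 2 * α * (1 - α) * (wt ω * wh ω)
        + (1 - α) ^ 2 * (wh ω * wh ω)) P := j4.add j5
    rw [e, integral_add j3 j45, integral_add j4 j5, integral_const_mul,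
      integral_const_mul, integral_const_mul, hσt', h2, hσh']
    ring
  -- the three error integrals
  have Et : ∫ ω, (w ω - wt ω) ^ 2 ∂P = A - 2 * σt2 + σt2 := by
    rw [expand_sq_integral hmw hmwt, h1, hσt']
  have Eh : ∫ ω, (w ω - wh ω) ^ 2 ∂P = A - 2 * c + σh2 := by
    rw [expand_sq_integral hmw hmwh, hσh']
  have Eb : ∫ ω, (w ω - wb ω) ^ 2 ∂P
      = A - 2 * (α * σt2 + (1 - α) * c)
        + (α ^ 2 * σt2 + 2 * α * (1 - α) * σt2 + (1 - α) ^ 2 * σh2) := by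
    rw [expand_sq_integral hmw hmwb, Ewb, Ebb]
  have d1 : (∫ ω, (w ω - wb ω) ^ 2 ∂P) - ∫ ω, (w ω - wt ω) ^ 2 ∂P
      = -((1 - α) ^ 2) * (σh2 - σt2) := by
    rw [Eb, Et]; linear_combination (-(2*(1-α))) * hαc
  have d2 : (∫ ω, (w ω - wb ω) ^ 2 ∂P) - ∫ ω, (w ω - wh ω) ^ 2 ∂P
      = -(α ^ 2) * (σh2 - σt2) := by
    rw [Eb, Eh]; linear_combination (2*α) * hαc
  refine ⟨by nlinarith [d1, sq_nonneg (1 - α)], by nlinarith [d2, sq_nonneg α], d1, d2⟩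
end
end

section
/- If the bivariate-and-higher ANOVA components are products of univariate ones, y_u(X_u) = y_∅ ∏_{i∈u} (y_{i}(X_i)/y_∅) for all |u| ≥ 2, then the univariate FDD approximation reproduces y exactly (ê_1 = 0), while the univariate ADD mean-squared error equals ẽ_1 = y_∅² Σ_{|u|≥2} ∏_{i∈u} E[y_{i}²(X_i)]/y_∅² > 0 provided at least one such product is positive. -/
open MeasureTheory Finset

noncomputable section


lemma pi_integral_prod {N : ℕ} (μ : Fin N → Measure ℝ) [h : ∀ i, SigmaFinite (μ i)]
    (f : Fin N → ℝ → ℝ) :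
    ∫ x, ∏ i, f i (x i) ∂(Measure.pi μ) = ∏ i, ∫ t, f i t ∂(μ i) := by
  have := integral_fin_nat_prod_eq_prod (μ := μ) f
  simpa [MeasureTheory.volume_pi] using this

lemma pi_integrable_prod {N : ℕ} (μ : Fin N → Measure ℝ) [h : ∀ i, SigmaFinite (μ i)]
    (f : Fin N → ℝ → ℝ) (hf : ∀ i, Integrable (f i) (μ i)) :
    Integrable (fun x : Fin N → ℝ => ∏ i, f i (x i)) (Measure.pi μ) := by
  have := Integrable.fin_nat_prod (μ := μ) (f := f) hf
  simpa [MeasureTheory.volume_pi] using this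


lemma expand_prod_one_add {N : ℕ} (c : ℝ) (g : Fin N → ℝ) :
    c * ∏ i, (1 + g i) =
      c + (∑ i, c * g i) +
      ∑ u ∈ univ.filter (fun u : Finset (Fin N) => 2 ≤ u.card), c * ∏ i ∈ u, g i := by
  have h1 : ∏ i, (1 + g i) = ∑ u : Finset (Fin N), ∏ i ∈ u, g i := by
    simp only [add_comm (1:ℝ)]
    rw [Finset.prod_add]
    simp [Finset.powerset_univ]
  rw [h1, Finset.mul_sum]
  rw [← Finset.sum_filter_add_sum_filter_not univ (fun u : Finset (Fin N) => 2 ≤ u.card)]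
  have h2 : univ.filter (fun u : Finset (Fin N) => ¬ 2 ≤ u.card)
      = insert (∅ : Finset (Fin N)) (univ.image fun i => {i}) := by
    ext u
    simp only [mem_filter, mem_univ, true_and, mem_insert, mem_image]
    constructor
    · intro h
      interval_cases h' : u.card
      · exact Or.inl (Finset.card_eq_zero.mp h')
      · exact Or.inr (by simpa [eq_comm] using Finset.card_eq_one.mp h')
    · rintro (rfl | ⟨a, -, rfl⟩) <;> simp
  have h3 : (∅ : Finset (Fin N)) ∉ univ.image (fun i : Fin N => ({i} : Finset (Fin N))) := by
    simp
  rw [h2, Finset.sum_insert h3, Finset.sum_image (fun a _ b _ h => Finset.singleton_injective h)]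
  simp [add_comm, add_assoc, add_left_comm]

theorem univariate_fdd_exact_for_product_structure
    {N : ℕ} (μ : Fin N → Measure ℝ) [∀ i, IsProbabilityMeasure (μ i)]
    (y₀ : ℝ) (hy₀ : y₀ ≠ 0)
    (Y1 : Fin N → ℝ → ℝ) (σ2 : Fin N → ℝ)
    (hmem : ∀ i, MemLp (Y1 i) 2 (μ i))
    (hzero : ∀ i, ∫ t, Y1 i t ∂(μ i) = 0)
    (hσ : ∀ i, σ2 i = ∫ t, (Y1 i t) ^ 2 ∂(μ i))
    (y : (Fin N → ℝ) → ℝ)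
    (hy : ∀ x, y x = y₀ + (∑ i, Y1 i (x i)) +
      ∑ u ∈ univ.filter (fun u : Finset (Fin N) => 2 ≤ u.card),
        y₀ * ∏ i ∈ u, (Y1 i (x i) / y₀))
    (yA1 yF1 : (Fin N → ℝ) → ℝ)
    (hyA1 : ∀ x, yA1 x = y₀ + ∑ i, Y1 i (x i))
    (hyF1 : ∀ x, yF1 x = y₀ * ∏ i, (y₀ + Y1 i (x i)) / y₀) :
    (∀ x, yF1 x = y x) ∧
    (∫ x, (y x - yA1 x) ^ 2 ∂(Measure.pi μ) =
      y₀ ^ 2 * ∑ u ∈ univ.filter (fun u : Finset (Fin N) => 2 ≤ u.card),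
        ∏ i ∈ u, σ2 i / y₀ ^ 2) ∧
    ((∃ u : Finset (Fin N), 2 ≤ u.card ∧ 0 < ∏ i ∈ u, σ2 i / y₀ ^ 2) →
      0 < ∫ x, (y x - yA1 x) ^ 2 ∂(Measure.pi μ)) := by
  have hexact : ∀ x, yF1 x = y x := by
    intro x
    have hdiv : ∀ i, (y₀ + Y1 i (x i)) / y₀ = 1 + Y1 i (x i) / y₀ := fun i => by
      rw [add_div, div_self hy₀]
    have hmd : ∀ i, y₀ * (Y1 i (x i) / y₀) = Y1 i (x i) := fun i => by field_simp
    rw [hyF1 x, hy x]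
    simp_rw [hdiv]
    rw [expand_prod_one_add]
    simp_rw [hmd]
  have hmse : ∫ x, (y x - yA1 x) ^ 2 ∂(Measure.pi μ) =
      y₀ ^ 2 * ∑ u ∈ univ.filter (fun u : Finset (Fin N) => 2 ≤ u.card),
        ∏ i ∈ u, σ2 i / y₀ ^ 2 := by
    set S := univ.filter (fun u : Finset (Fin N) => 2 ≤ u.card) with hS
    -- the coordinate factors
    set g : Finset (Fin N) → Finset (Fin N) → Fin N → ℝ → ℝ :=
      fun u v i t => (if i ∈ u then Y1 i t / y₀ else 1) * (if i ∈ v then Y1 i t / y₀ else 1)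
      with hg
    have hintf : ∀ i, Integrable (fun t => Y1 i t / y₀) (μ i) := fun i =>
      ((hmem i).integrable (by norm_num)).div_const y₀
    have hintf2 : ∀ i, Integrable (fun t => (Y1 i t / y₀) * (Y1 i t / y₀)) (μ i) := by
      intro i
      have h2 : MemLp (fun t => Y1 i t / y₀) 2 (μ i) := by
        simpa [div_eq_inv_mul] using (hmem i).const_mul y₀⁻¹
      have := h2.integrable_sq
      simpa [sq] using this
    have hintg : ∀ u v i, Integrable (g u v i) (μ i) := by
      intro u v i
      by_cases hu : i ∈ u <;> by_cases hv : i ∈ v <;>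
        simp only [hg, hu, hv, if_true, if_false, mul_one, one_mul] <;>
        first
          | exact hintf2 i
          | exact hintf i
          | exact integrable_const 1
    -- pointwise identity
    have hpt : ∀ x, (y x - yA1 x) ^ 2 =
        ∑ u ∈ S, ∑ v ∈ S, y₀ ^ 2 * ∏ i, g u v i (x i) := by
      intro x
      have h1 : y x - yA1 x = ∑ u ∈ S, y₀ * ∏ i ∈ u, (Y1 i (x i) / y₀) := by
        rw [hy x, hyA1 x]; ring
      rw [h1, sq, Finset.sum_mul_sum]
      refine Finset.sum_congr rfl fun u _ => Finset.sum_congr rfl fun v _ => ?_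
      have hu : ∏ i ∈ u, (Y1 i (x i) / y₀) = ∏ i, (if i ∈ u then Y1 i (x i) / y₀ else 1) := by
        rw [Finset.prod_ite_mem, Finset.univ_inter]
      have hv : ∏ i ∈ v, (Y1 i (x i) / y₀) = ∏ i, (if i ∈ v then Y1 i (x i) / y₀ else 1) := by
        rw [Finset.prod_ite_mem, Finset.univ_inter]
      have hgl : ∏ i, g u v i (x i) = ∏ i, ((if i ∈ u then Y1 i (x i) / y₀ else 1) *
          (if i ∈ v then Y1 i (x i) / y₀ else 1)) := rfl
      rw [hu, hv, hgl, Finset.prod_mul_distrib]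
      ring
    -- integral of each term
    have hterm : ∀ u ∈ S, ∀ v ∈ S,
        ∫ x, y₀ ^ 2 * ∏ i, g u v i (x i) ∂(Measure.pi μ) =
          if u = v then y₀ ^ 2 * ∏ i ∈ u, σ2 i / y₀ ^ 2 else 0 := by
      intro u _ v _
      rw [MeasureTheory.integral_const_mul, pi_integral_prod μ (g u v)]
      by_cases huv : u = v
      · subst huv
        rw [if_pos rfl]
        congr 1
        have : ∀ i, ∫ t, g u u i t ∂(μ i) = if i ∈ u then σ2 i / y₀ ^ 2 else 1 := by
          intro i
          by_cases hu : i ∈ u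
          · simp only [hg, hu, if_true]
            have : ∀ t, (Y1 i t / y₀) * (Y1 i t / y₀) = (Y1 i t) ^ 2 / y₀ ^ 2 := by
              intro t; field_simp
            simp_rw [this]
            rw [integral_div, ← hσ i]
          · simp only [hg, hu, if_false, mul_one]
            simp
        simp_rw [this]
        rw [Finset.prod_ite_mem, Finset.univ_inter]
      · rw [if_neg huv]
        obtain ⟨i₀, hi₀⟩ : ∃ i₀, (i₀ ∈ u ∧ i₀ ∉ v) ∨ (i₀ ∈ v ∧ i₀ ∉ u) := by
          by_contra h
          push_neg at h
          exact huv (Finset.ext fun a => ⟨(h a).1, (h a).2⟩)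
        have hz : ∫ t, g u v i₀ t ∂(μ i₀) = 0 := by
          rcases hi₀ with ⟨h1, h2⟩ | ⟨h1, h2⟩ <;>
            simp only [hg, h1, h2, if_true, if_false, mul_one, one_mul] <;>
            rw [integral_div, hzero i₀, zero_div]
        rw [mul_eq_zero]
        exact Or.inr (Finset.prod_eq_zero (Finset.mem_univ i₀) hz)
    -- combine
    calc ∫ x, (y x - yA1 x) ^ 2 ∂(Measure.pi μ)
        = ∫ x, ∑ u ∈ S, ∑ v ∈ S, y₀ ^ 2 * ∏ i, g u v i (x i) ∂(Measure.pi μ) := by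
          simp_rw [hpt]
      _ = ∑ u ∈ S, ∑ v ∈ S, ∫ x, y₀ ^ 2 * ∏ i, g u v i (x i) ∂(Measure.pi μ) := by
          rw [integral_finset_sum]
          · exact Finset.sum_congr rfl fun u _ => integral_finset_sum _ fun v _ =>
              (pi_integrable_prod μ (g u v) (hintg u v)).const_mul _
          · intro u _
            exact integrable_finset_sum _ fun v _ =>
              (pi_integrable_prod μ (g u v) (hintg u v)).const_mul _
      _ = ∑ u ∈ S, (y₀ ^ 2 * ∏ i ∈ u, σ2 i / y₀ ^ 2) := by
          refine Finset.sum_congr rfl fun u hu => ?_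
          rw [Finset.sum_eq_single u (fun v hv hne => by
            rw [hterm u hu v hv, if_neg (Ne.symm hne)]) (fun h => (h hu).elim)]
          rw [hterm u hu u hu, if_pos rfl]
      _ = y₀ ^ 2 * ∑ u ∈ S, ∏ i ∈ u, σ2 i / y₀ ^ 2 := by rw [Finset.mul_sum]
  refine ⟨hexact, hmse, ?_⟩
  rintro ⟨u, hu2, hupos⟩
  rw [hmse]
  have hy2 : (0:ℝ) < y₀ ^ 2 := by positivity
  refine mul_pos hy2 (Finset.sum_pos' (fun v _ => Finset.prod_nonneg fun i _ => ?_)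
    ⟨u, by simp [hu2], hupos⟩)
  have : 0 ≤ σ2 i := by
    rw [hσ i]; exact integral_nonneg fun t => sq_nonneg _
  exact div_nonneg this (sq_nonneg y₀)
end
end

section
/- For a purely additive function y = μ_0 + Σ_i g_i(X_i), the univariate ADD approximation is exact (ẽ_1 = 0), while the univariate FDD approximation has mean-squared error ê_1 = y_∅² E[Σ_{|u|≥2} ∏_{i∈u} (y_{i}(X_i)/y_∅)]² ≥ 0, where y_{i}(X_i) = g_i(X_i) − μ_i and y_∅ = μ_0 + Σ_i μ_i ≠ 0. -/
open MeasureTheory Finset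

noncomputable section

lemma prod_one_add_expand {N : ℕ} (a : Fin N → ℝ) :
    ∏ i, (1 + a i) = 1 + (∑ i, a i) +
      ∑ u ∈ univ.filter (fun u : Finset (Fin N) => 2 ≤ u.card), ∏ i ∈ u, a i := by
  have h1 : ∏ i, (1 + a i) = ∑ t ∈ (univ : Finset (Fin N)).powerset, ∏ i ∈ t, a i := by
    have : ∀ i ∈ (univ : Finset (Fin N)), (1 + a i) = a i + 1 := fun i _ => add_comm _ _
    rw [Finset.prod_congr rfl this, Finset.prod_add]
    simp
  rw [h1, Finset.powerset_univ,
    ← Finset.sum_filter_add_sum_filter_not (univ : Finset (Finset (Fin N)))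
      (fun u => 2 ≤ u.card)]
  have h2 : (univ : Finset (Finset (Fin N))).filter (fun u => ¬ 2 ≤ u.card)
      = insert ∅ (univ.image fun i => ({i} : Finset (Fin N))) := by
    ext u
    simp only [mem_filter, mem_univ, true_and, not_le, mem_insert, mem_image, true_and]
    constructor
    · intro h
      interval_cases h' : u.card
      · left; exact Finset.card_eq_zero.mp h'
      · rcases Finset.card_eq_one.mp h' with ⟨i, hi⟩
        right; exact ⟨i, hi.symm⟩
    · rintro (rfl | ⟨i, rfl⟩) <;> simp
  have h3 : ∑ u ∈ (univ : Finset (Finset (Fin N))).filter (fun u => ¬ 2 ≤ u.card),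
      ∏ i ∈ u, a i = 1 + ∑ i, a i := by
    rw [h2, Finset.sum_insert (by simp), Finset.sum_image
      (fun i _ j _ h => Finset.singleton_injective h)]
    simp
  rw [h3]; ring

theorem univariate_add_exact_for_additive
    {N : ℕ} (μ : Fin N → Measure ℝ) [∀ i, IsProbabilityMeasure (μ i)]
    (μ₀ : ℝ) (g : Fin N → ℝ → ℝ) (μm : Fin N → ℝ)
    (hmem : ∀ i, MemLp (g i) 2 (μ i))
    (hμm : ∀ i, μm i = ∫ t, g i t ∂(μ i))
    (y₀ : ℝ) (hy₀def : y₀ = μ₀ + ∑ i, μm i) (hy₀ : y₀ ≠ 0)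
    (y : (Fin N → ℝ) → ℝ) (hy : ∀ x, y x = μ₀ + ∑ i, g i (x i))
    (yA1 yF1 : (Fin N → ℝ) → ℝ)
    (hyA1 : ∀ x, yA1 x = y₀ + ∑ i, (g i (x i) - μm i))
    (hyF1 : ∀ x, yF1 x = y₀ * ∏ i, (y₀ + g i (x i) - μm i) / y₀) :
    (∀ x, yA1 x = y x) ∧
    (∫ x, (y x - yA1 x) ^ 2 ∂(Measure.pi μ) = 0) ∧
    (∫ x, (y x - yF1 x) ^ 2 ∂(Measure.pi μ) =
      y₀ ^ 2 * ∫ x, (∑ u ∈ univ.filter (fun u : Finset (Fin N) => 2 ≤ u.card),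
        ∏ i ∈ u, ((g i (x i) - μm i) / y₀)) ^ 2 ∂(Measure.pi μ)) ∧
    (0 ≤ ∫ x, (y x - yF1 x) ^ 2 ∂(Measure.pi μ)) := by
  have hA : ∀ x, yA1 x = y x := by
    intro x
    rw [hyA1, hy, hy₀def, Finset.sum_sub_distrib]
    ring
  have key : ∀ x, (y x - yF1 x) ^ 2 =
      y₀ ^ 2 * (∑ u ∈ univ.filter (fun u : Finset (Fin N) => 2 ≤ u.card),
        ∏ i ∈ u, ((g i (x i) - μm i) / y₀)) ^ 2 := by
    intro x
    have hprod : ∀ i ∈ (univ : Finset (Fin N)),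
        (y₀ + g i (x i) - μm i) / y₀ = 1 + (g i (x i) - μm i) / y₀ := by
      intro i _; field_simp; ring
    have hsum : y₀ * ∑ i, (g i (x i) - μm i) / y₀ = ∑ i, (g i (x i) - μm i) := by
      rw [Finset.mul_sum]
      exact Finset.sum_congr rfl fun i _ => by field_simp
    have hyx : y x = y₀ + ∑ i, (g i (x i) - μm i) := by
      rw [hy, hy₀def, Finset.sum_sub_distrib]; ring
    rw [hyx, hyF1, Finset.prod_congr rfl hprod,
      prod_one_add_expand (fun i => (g i (x i) - μm i) / y₀)]
    rw [← hsum]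
    ring
  refine ⟨hA, ?_, ?_, ?_⟩
  · simp [hA]
  · calc ∫ x, (y x - yF1 x) ^ 2 ∂(Measure.pi μ)
        = ∫ x, y₀ ^ 2 * (∑ u ∈ univ.filter (fun u : Finset (Fin N) => 2 ≤ u.card),
            ∏ i ∈ u, ((g i (x i) - μm i) / y₀)) ^ 2 ∂(Measure.pi μ) := by
          exact integral_congr_ae (Filter.Eventually.of_forall key)
      _ = _ := by rw [integral_const_mul]
  · exact integral_nonneg fun x => sq_nonneg _
end
end
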